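/- Let X be a topological space, E₁, E₂ and F real vector spaces with topologies making them topological vector spaces, and k, l ≥ 1 natural numbers. Let f : X × E₁^k × E₂^l → F be a map such that f(x, ·, w₁,…,w_l) is symmetric k-linear for all fixed x and w's, and f(x, v₁,…,v_k, ·) is symmetric l-linear for all fixed x and v's. Then f is continuous if and only if the map g : X × E₁ × E₂ → F, g(x, v, w) := f(x, v,…,v, w,…,w) is continuous. -/

import Mathlib

open Finset

lemma aux_superset_sum {ι : Type*} [Fintype ι] [DecidableEq ι] (A : Finset ι) :
    ∑ S ∈ (Finset.univ : Finset ι).powerset,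
        (if A ⊆ S then ((-1 : ℤ) ^ (Fintype.card ι - S.card)) else 0)
      = if A = (Finset.univ : Finset ι) then 1 else 0 := by
  classical
  rw [← Finset.sum_filter]
  have hpow : ∀ c t : ℕ, t ≤ c → (-1 : ℤ) ^ (c - t) = (-1) ^ c * (-1) ^ t := by
    intro c t h
    have h1 : (-1 : ℤ) ^ c = (-1) ^ (c - t) * (-1) ^ t := by
      rw [← pow_add, Nat.sub_add_cancel h]
    rw [h1, mul_assoc, ← mul_pow]
    norm_num
  have hbij : ∑ S ∈ (Finset.univ : Finset ι).powerset.filter (fun S => A ⊆ S),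
        ((-1 : ℤ) ^ (Fintype.card ι - S.card))
      = ∑ T ∈ Aᶜ.powerset, ((-1 : ℤ) ^ (Aᶜ.card - T.card)) := by
    apply Finset.sum_nbij' (fun S => S \ A) (fun T => A ∪ T)
    · intro S hS
      simp only [Finset.mem_filter, Finset.mem_powerset] at hS
      simp only [Finset.mem_powerset]
      intro x hx
      simp only [Finset.mem_sdiff] at hx
      simp [hx.2]
    · intro T hT
      simp only [Finset.mem_powerset] at hT
      simp only [Finset.mem_filter, Finset.mem_powerset]
      exact ⟨Finset.subset_univ _, Finset.subset_union_left⟩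
    · intro S hS
      simp only [Finset.mem_filter, Finset.mem_powerset] at hS
      exact Finset.union_sdiff_of_subset hS.2
    · intro T hT
      simp only [Finset.mem_powerset] at hT
      rw [Finset.union_sdiff_cancel_left]
      rw [Finset.disjoint_left]
      intro a ha haT
      exact (Finset.mem_compl.mp (hT haT)) ha
    · intro S hS
      simp only [Finset.mem_filter, Finset.mem_powerset] at hS
      congr 1
      have h1 : (S \ A).card = S.card - A.card := Finset.card_sdiff_of_subset hS.2
      have h2 : A.card ≤ S.card := Finset.card_le_card hS.2
      have h3 : S.card ≤ Fintype.card ι := S.card_le_univ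
      have h4 : A.card + Aᶜ.card = Fintype.card ι := Finset.card_add_card_compl A
      omega
  rw [hbij]
  have hconv : ∀ T ∈ Aᶜ.powerset, ((-1 : ℤ) ^ (Aᶜ.card - T.card))
      = (-1) ^ Aᶜ.card * (-1) ^ T.card := by
    intro T hT
    exact hpow _ _ (Finset.card_le_card (Finset.mem_powerset.mp hT))
  rw [Finset.sum_congr rfl hconv, ← Finset.mul_sum,
    Finset.sum_powerset_neg_one_pow_card]
  by_cases hA : A = Finset.univ
  · simp [hA]
  · have : Aᶜ ≠ ∅ := fun h => hA ((Finset.compl_eq_empty_iff A).mp h)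
    simp [hA, this]

lemma polar_identity {ι : Type*} [Fintype ι] [DecidableEq ι]
    {E G : Type*} [AddCommGroup E] [Module ℝ E] [AddCommGroup G] [Module ℝ G]
    (f : MultilinearMap ℝ (fun _ : ι => E) G)
    (hf : ∀ (σ : Equiv.Perm ι) (v : ι → E), f (v ∘ σ) = f v) (v : ι → E) :
    ∑ S ∈ (Finset.univ : Finset ι).powerset,
        ((-1 : ℤ) ^ (Fintype.card ι - S.card)) • f (fun _ => ∑ i ∈ S, v i)
      = ((Fintype.card ι).factorial : ℤ) • f v := by
  classical
  have h1 : ∀ S : Finset ι, f (fun _ => ∑ i ∈ S, v i)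
      = ∑ r ∈ Fintype.piFinset (fun _ : ι => S), f (fun j => v (r j)) :=
    fun S => f.map_sum_finset (fun _ j => v j) (fun _ => S)
  have h2 : ∀ S : Finset ι, Fintype.piFinset (fun _ : ι => S)
      = (Fintype.piFinset (fun _ : ι => (Finset.univ : Finset ι))).filter
          (fun r => Finset.image r Finset.univ ⊆ S) := by
    intro S
    ext r
    simp [Fintype.mem_piFinset, Finset.image_subset_iff]
  calc ∑ S ∈ (Finset.univ : Finset ι).powerset,
        ((-1 : ℤ) ^ (Fintype.card ι - S.card)) • f (fun _ => ∑ i ∈ S, v i)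
      = ∑ S ∈ (Finset.univ : Finset ι).powerset,
          ∑ r ∈ Fintype.piFinset (fun _ : ι => (Finset.univ : Finset ι)),
            (if Finset.image r Finset.univ ⊆ S
              then ((-1 : ℤ) ^ (Fintype.card ι - S.card)) • f (fun j => v (r j)) else 0) := by
        refine Finset.sum_congr rfl fun S _ => ?_
        rw [h1, h2, Finset.smul_sum, Finset.sum_filter]
    _ = ∑ r ∈ Fintype.piFinset (fun _ : ι => (Finset.univ : Finset ι)),
          (∑ S ∈ (Finset.univ : Finset ι).powerset,
            (if Finset.image r Finset.univ ⊆ S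
              then ((-1 : ℤ) ^ (Fintype.card ι - S.card)) else 0)) • f (fun j => v (r j)) := by
        rw [Finset.sum_comm]
        refine Finset.sum_congr rfl fun r _ => ?_
        rw [Finset.sum_smul]
        refine Finset.sum_congr rfl fun S _ => ?_
        rw [ite_smul, zero_smul]
    _ = ∑ r ∈ (Fintype.piFinset (fun _ : ι => (Finset.univ : Finset ι))).filter
            (fun r => Finset.image r Finset.univ = Finset.univ), f (fun j => v (r j)) := by
        rw [Finset.sum_filter]
        refine Finset.sum_congr rfl fun r _ => ?_
        rw [aux_superset_sum]
        split <;> simp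
    _ = ((Fintype.card ι).factorial : ℤ) • f v := by
        have hsurj : ∀ r : ι → ι, Finset.image r Finset.univ = Finset.univ ↔
            Function.Surjective r := by
          intro r
          constructor
          · intro h y
            have : y ∈ Finset.image r Finset.univ := by rw [h]; exact Finset.mem_univ y
            obtain ⟨x, _, hx⟩ := Finset.mem_image.mp this
            exact ⟨x, hx⟩
          · intro h
            ext y
            simp only [Finset.mem_image, Finset.mem_univ, iff_true, true_and]
            exact h y
        have heq : ∀ r ∈ (Fintype.piFinset (fun _ : ι => (Finset.univ : Finset ι))).filter
            (fun r => Finset.image r Finset.univ = Finset.univ),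
            f (fun j => v (r j)) = f v := by
          intro r hr
          rw [Finset.mem_filter] at hr
          have hs : Function.Surjective r := (hsurj r).mp hr.2
          have hb : Function.Bijective r := ⟨Finite.injective_iff_surjective.mpr hs, hs⟩
          have := hf (Equiv.ofBijective r hb) v
          exact this
        rw [Finset.sum_congr rfl heq, Finset.sum_const]
        have huniv : (Fintype.piFinset (fun _ : ι => (Finset.univ : Finset ι))) =
            (Finset.univ : Finset (ι → ι)) := Fintype.piFinset_univ
        have e : Equiv.Perm ι ≃ {r : ι → ι // Finset.image r Finset.univ = Finset.univ} :=
          { toFun := fun σ => ⟨σ, (hsurj σ).mpr σ.surjective⟩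
            invFun := fun r => Equiv.ofBijective r.1
              ⟨Finite.injective_iff_surjective.mpr ((hsurj r.1).mp r.2), (hsurj r.1).mp r.2⟩
            left_inv := fun σ => by ext x; rfl
            right_inv := fun r => by ext x; rfl }
        have hcard : ((Fintype.piFinset (fun _ : ι => (Finset.univ : Finset ι))).filter
            (fun r => Finset.image r Finset.univ = Finset.univ)).card
            = (Fintype.card ι).factorial := by
          rw [huniv, ← Fintype.card_subtype, ← Fintype.card_congr e, Fintype.card_perm]
        rw [hcard, natCast_zsmul]

set_option maxHeartbeats 2000000 in
/-- Double polarization: a map `f : X × E₁ᵏ × E₂ˡ → F` which is symmetric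
`k`-linear in the `E₁`-block and symmetric `l`-linear in the `E₂`-block
(for each fixed `x`) is continuous iff
`g(x,v,w) := f(x,v,…,v,w,…,w)` is continuous. -/
theorem stmt1
    {X : Type*} [TopologicalSpace X]
    {E₁ E₂ F : Type*}
    [AddCommGroup E₁] [Module ℝ E₁] [TopologicalSpace E₁]
    [IsTopologicalAddGroup E₁] [ContinuousSMul ℝ E₁]
    [AddCommGroup E₂] [Module ℝ E₂] [TopologicalSpace E₂]
    [IsTopologicalAddGroup E₂] [ContinuousSMul ℝ E₂]
    [AddCommGroup F] [Module ℝ F] [TopologicalSpace F]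
    [IsTopologicalAddGroup F] [ContinuousSMul ℝ F]
    (k l : ℕ) (hk : 1 ≤ k) (hl : 1 ≤ l)
    (M : X → MultilinearMap ℝ (fun _ : Fin k => E₁)
          (MultilinearMap ℝ (fun _ : Fin l => E₂) F))
    (hsymm₁ : ∀ (x : X) (σ : Equiv.Perm (Fin k)) (v : Fin k → E₁),
      M x (v ∘ σ) = M x v)
    (hsymm₂ : ∀ (x : X) (v : Fin k → E₁) (σ : Equiv.Perm (Fin l))
      (w : Fin l → E₂), M x v (w ∘ σ) = M x v w) :
    Continuous (fun p : X × (Fin k → E₁) × (Fin l → E₂) => M p.1 p.2.1 p.2.2) ↔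
      Continuous (fun p : X × E₁ × E₂ =>
        M p.1 (fun _ => p.2.1) (fun _ => p.2.2)) := by
  constructor
  · intro h
    have hφ : Continuous (fun p : X × E₁ × E₂ =>
        ((p.1, fun _ => p.2.1, fun _ => p.2.2) : X × (Fin k → E₁) × (Fin l → E₂))) :=
      continuous_fst.prodMk
        ((continuous_pi fun _ => continuous_fst.comp continuous_snd).prodMk
          (continuous_pi fun _ => continuous_snd.comp continuous_snd))
    exact h.comp hφ
  · intro h
    -- evaluation at `w` as a linear map
    let ev : (Fin l → E₂) → (MultilinearMap ℝ (fun _ : Fin l => E₂) F →ₗ[ℝ] F) :=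
      fun w => { toFun := fun N => N w
                 map_add' := fun _ _ => rfl
                 map_smul' := fun _ _ => rfl }
    have polarM : ∀ (x : X) (v : Fin k → E₁) (w : Fin l → E₂),
        ((k.factorial * l.factorial : ℤ)) • M x v w
          = ∑ S ∈ (Finset.univ : Finset (Fin k)).powerset,
              ∑ T ∈ (Finset.univ : Finset (Fin l)).powerset,
                ((-1 : ℤ) ^ (k - S.card) * (-1 : ℤ) ^ (l - T.card)) •
                  M x (fun _ => ∑ i ∈ S, v i) (fun _ => ∑ j ∈ T, w j) := by
      intro x v w
      have hA : ∑ S ∈ (Finset.univ : Finset (Fin k)).powerset,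
          ((-1 : ℤ) ^ (k - S.card)) • M x (fun _ => ∑ i ∈ S, v i) w
            = (k.factorial : ℤ) • M x v w := by
        have hsymm' : ∀ (σ : Equiv.Perm (Fin k)) (v' : Fin k → E₁),
            ((ev w).compMultilinearMap (M x)) (v' ∘ σ)
              = ((ev w).compMultilinearMap (M x)) v' := by
          intro σ v'
          simp only [LinearMap.compMultilinearMap_apply]
          rw [hsymm₁ x σ v']
        have := polar_identity ((ev w).compMultilinearMap (M x)) hsymm' v
        simpa [Fintype.card_fin, ev, LinearMap.coe_mk, AddHom.coe_mk] using this
      have hB : ∀ (a : Fin k → E₁),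
          ∑ T ∈ (Finset.univ : Finset (Fin l)).powerset,
            ((-1 : ℤ) ^ (l - T.card)) • M x a (fun _ => ∑ j ∈ T, w j)
              = (l.factorial : ℤ) • M x a w := by
        intro a
        have := polar_identity (M x a) (fun σ w' => hsymm₂ x a σ w') w
        simpa [Fintype.card_fin] using this
      calc ((k.factorial * l.factorial : ℤ)) • M x v w
          = (l.factorial : ℤ) • ((k.factorial : ℤ) • M x v w) := by
            rw [smul_smul, mul_comm]
        _ = (l.factorial : ℤ) • ∑ S ∈ (Finset.univ : Finset (Fin k)).powerset,
              ((-1 : ℤ) ^ (k - S.card)) • M x (fun _ => ∑ i ∈ S, v i) w := by rw [hA]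
        _ = ∑ S ∈ (Finset.univ : Finset (Fin k)).powerset,
              ((-1 : ℤ) ^ (k - S.card)) •
                ((l.factorial : ℤ) • M x (fun _ => ∑ i ∈ S, v i) w) := by
            rw [Finset.smul_sum]
            exact Finset.sum_congr rfl fun S _ => smul_comm _ _ _
        _ = ∑ S ∈ (Finset.univ : Finset (Fin k)).powerset,
              ∑ T ∈ (Finset.univ : Finset (Fin l)).powerset,
                ((-1 : ℤ) ^ (k - S.card) * (-1 : ℤ) ^ (l - T.card)) •
                  M x (fun _ => ∑ i ∈ S, v i) (fun _ => ∑ j ∈ T, w j) := by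
            refine Finset.sum_congr rfl fun S _ => ?_
            rw [← hB (fun _ => ∑ i ∈ S, v i), Finset.smul_sum]
            exact Finset.sum_congr rfl fun T _ => by rw [smul_smul]
    have key : ∀ (x : X) (v : Fin k → E₁) (w : Fin l → E₂),
        M x v w = ((k.factorial * l.factorial : ℝ))⁻¹ •
          ∑ S ∈ (Finset.univ : Finset (Fin k)).powerset,
            ∑ T ∈ (Finset.univ : Finset (Fin l)).powerset,
              ((-1 : ℝ) ^ (k - S.card) * (-1 : ℝ) ^ (l - T.card)) •
                M x (fun _ => ∑ i ∈ S, v i) (fun _ => ∑ j ∈ T, w j) := by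
      intro x v w
      have hne : ((k.factorial * l.factorial : ℝ)) ≠ 0 := by
        positivity
      rw [eq_inv_smul_iff₀ hne]
      have hcast : ((k.factorial * l.factorial : ℝ)) • M x v w
          = ((k.factorial * l.factorial : ℤ)) • M x v w := by
        rw [← Int.cast_smul_eq_zsmul ℝ]
        norm_num
      rw [hcast, polarM]
      refine Finset.sum_congr rfl fun S _ => Finset.sum_congr rfl fun T _ => ?_
      rw [← Int.cast_smul_eq_zsmul ℝ]
      norm_num
    have : (fun p : X × (Fin k → E₁) × (Fin l → E₂) => M p.1 p.2.1 p.2.2)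
        = fun p : X × (Fin k → E₁) × (Fin l → E₂) =>
            ((k.factorial * l.factorial : ℝ))⁻¹ •
              ∑ S ∈ (Finset.univ : Finset (Fin k)).powerset,
                ∑ T ∈ (Finset.univ : Finset (Fin l)).powerset,
                  ((-1 : ℝ) ^ (k - S.card) * (-1 : ℝ) ^ (l - T.card)) •
                    M p.1 (fun _ => ∑ i ∈ S, p.2.1 i) (fun _ => ∑ j ∈ T, p.2.2 j) :=
      funext fun p => key p.1 p.2.1 p.2.2
    rw [this]
    apply Continuous.const_smul
    apply continuous_finset_sum
    intro S _
    apply continuous_finset_sum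
    intro T _
    apply Continuous.const_smul
    have hφ : Continuous (fun p : X × (Fin k → E₁) × (Fin l → E₂) =>
        ((p.1, ∑ i ∈ S, p.2.1 i, ∑ j ∈ T, p.2.2 j) : X × E₁ × E₂)) :=
      continuous_fst.prodMk
        ((continuous_finset_sum S fun i _ =>
            (continuous_apply i).comp (continuous_fst.comp continuous_snd)).prodMk
          (continuous_finset_sum T fun j _ =>
            (continuous_apply j).comp (continuous_snd.comp continuous_snd)))
    exact h.comp hφ
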